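/- Let R be a commutative ring that is a ℚ-algebra, equipped with a family (d_i)_{i ∈ Δ} of derivations, and let 𝔭 be a prime ideal of R. Define 𝔭_# := {x ∈ R : θ(x) ∈ 𝔭 for every finite composition θ of derivations from the family, including the identity map}. Then 𝔭_# is a prime ideal of R (and it is a Δ-ideal contained in 𝔭). -/

import Mathlib

/-- The composition `d_{i₁} ∘ ⋯ ∘ d_{iₙ}` of the derivations of the family `d`
indexed by the word `l` (the empty word giving the identity map of `R`). -/
def derWord {R Δ : Type*} [CommRing R] (d : Δ → Derivation ℤ R R) (l : List Δ) :
    R → R :=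
  l.foldr (fun i (f : R → R) => ⇑(d i) ∘ f) id

namespace DeltaAux

variable {R Δ : Type*} [CommRing R]

theorem derWord_cons (d : Δ → Derivation ℤ R R) (i : Δ) (l : List Δ) (x : R) :
    derWord d (i :: l) x = d i (derWord d l x) := rfl

theorem derWord_nil (d : Δ → Derivation ℤ R R) (x : R) : derWord d [] x = x := rfl

theorem derWord_append (d : Δ → Derivation ℤ R R) (l₁ l₂ : List Δ) (x : R) :
    derWord d (l₁ ++ l₂) x = derWord d l₁ (derWord d l₂ x) := by
  induction l₁ with
  | nil => rfl
  | cons i l ih => simp [derWord_cons, ih]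

theorem derWord_add (d : Δ → Derivation ℤ R R) (l : List Δ) (x y : R) :
    derWord d l (x + y) = derWord d l x + derWord d l y := by
  induction l with
  | nil => rfl
  | cons i l ih => simp [derWord_cons, ih, map_add]

theorem derWord_zero (d : Δ → Derivation ℤ R R) (l : List Δ) :
    derWord d l 0 = 0 := by
  induction l with
  | nil => rfl
  | cons i l ih => simp [derWord_cons, ih]

/-- All ways to split a word into a pair of complementary subwords (with
multiplicity), matching the Leibniz expansion of a word applied to a product. -/
def splits : List Δ → List (List Δ × List Δ)
  | [] => [([], [])]
  | i :: l => (splits l).flatMap fun pr => [(i :: pr.1, pr.2), (pr.1, i :: pr.2)]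

theorem length_of_mem_splits {l s t : List Δ} (h : (s, t) ∈ splits l) :
    s.length + t.length = l.length := by
  induction l generalizing s t with
  | nil =>
    simp only [splits, List.mem_singleton, Prod.mk.injEq] at h
    simp [h.1, h.2]
  | cons i l ih =>
    simp only [splits, List.mem_flatMap, List.mem_cons, List.mem_singleton,
      Prod.mk.injEq, List.not_mem_nil, or_false] at h
    obtain ⟨pr, hpr, h | h⟩ := h <;>
      · obtain ⟨h1, h2⟩ := h
        subst h1; subst h2
        have := ih hpr
        simp at this ⊢
        omega

theorem mem_of_mem_splits {l s t : List Δ} (h : (s, t) ∈ splits l) :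
    ∀ x ∈ l, x ∈ s ∨ x ∈ t := by
  induction l generalizing s t with
  | nil => simp
  | cons i l ih =>
    simp only [splits, List.mem_flatMap, List.mem_cons, List.mem_singleton,
      Prod.mk.injEq, List.not_mem_nil, or_false] at h
    obtain ⟨pr, hpr, h | h⟩ := h <;>
      · obtain ⟨h1, h2⟩ := h
        subst h1; subst h2
        intro x hx
        rcases List.mem_cons.1 hx with h | h
        · subst h; simp
        · rcases ih hpr x h with h' | h' <;> simp [h']

theorem mem_splits_of_mem_splits {l s t : List Δ} (h : (s, t) ∈ splits l) :
    ∀ x ∈ s, x ∈ l := by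
  induction l generalizing s t with
  | nil =>
    simp only [splits, List.mem_singleton, Prod.mk.injEq] at h
    simp [h.1]
  | cons i l ih =>
    simp only [splits, List.mem_flatMap, List.mem_cons, List.mem_singleton,
      Prod.mk.injEq, List.not_mem_nil, or_false] at h
    obtain ⟨pr, hpr, h | h⟩ := h <;>
      · obtain ⟨h1, h2⟩ := h
        subst h1; subst h2
        intro x hx
        first
        | (rcases List.mem_cons.1 hx with h | h
           · subst h; simp
           · exact List.mem_cons_of_mem _ (ih hpr x h))
        | exact List.mem_cons_of_mem _ (ih hpr x hx)

theorem swap_mem_splits {l s t : List Δ} (h : (s, t) ∈ splits l) :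
    (t, s) ∈ splits l := by
  induction l generalizing s t with
  | nil =>
    simp only [splits, List.mem_singleton, Prod.mk.injEq] at h ⊢
    exact ⟨h.2, h.1⟩
  | cons i l ih =>
    simp only [splits, List.mem_flatMap, List.mem_cons, List.mem_singleton,
      Prod.mk.injEq, List.not_mem_nil, or_false] at h ⊢
    obtain ⟨pr, hpr, h | h⟩ := h
    · exact ⟨(pr.2, pr.1), ih (by simpa using hpr), Or.inr ⟨h.2, h.1⟩⟩
    · exact ⟨(pr.2, pr.1), ih (by simpa using hpr), Or.inl ⟨h.2, h.1⟩⟩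

theorem append_mem_splits (s t : List Δ) : (s, t) ∈ splits (s ++ t) := by
  induction s with
  | nil =>
    simp only [List.nil_append]
    induction t with
    | nil => simp [splits]
    | cons j t ih =>
      simp only [splits, List.mem_flatMap]
      exact ⟨([], t), ih, by simp⟩
  | cons i s ih =>
    simp only [List.cons_append, splits, List.mem_flatMap]
    exact ⟨(s, t), ih, by simp⟩

theorem splits_cons_sum {M : Type*} [AddCommMonoid M] (i : Δ) (l : List Δ)
    (f : List Δ × List Δ → M) :
    ((splits (i :: l)).map f).sum
      = ((splits l).map fun pr => f (i :: pr.1, pr.2) + f (pr.1, i :: pr.2)).sum := by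
  show (((splits l).flatMap fun pr => [(i :: pr.1, pr.2), (pr.1, i :: pr.2)]).map f).sum = _
  induction splits l with
  | nil => simp
  | cons a L ih =>
    simp only [List.flatMap_cons, List.map_append, List.sum_append, ih, List.map_cons,
      List.sum_cons, List.map_nil, List.sum_nil, add_zero]

theorem derWord_mul (d : Δ → Derivation ℤ R R) (l : List Δ) (x y : R) :
    derWord d l (x * y)
      = ((splits l).map fun pr => derWord d pr.1 x * derWord d pr.2 y).sum := by
  induction l with
  | nil => simp [splits, derWord_nil]
  | cons i l ih =>
    rw [derWord_cons, ih, map_list_sum, splits_cons_sum, List.map_map]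
    refine congrArg List.sum (List.map_congr_left fun pr _ => ?_)
    simp only [Function.comp_apply, Derivation.leibniz, smul_eq_mul, derWord_cons]
    ring

section Order

variable [LinearOrder Δ]

theorem list_lt_iff (l l' : List Δ) : l < l' ↔ List.Lex (· < ·) l l' := Iff.rfl

theorem cons_lt_cons_of_lt (i : Δ) {l l' : List Δ} (h : l < l') : i :: l < i :: l' :=
  List.Lex.cons h

theorem cons_lt_cons_of_head {i j : Δ} (h : i < j) (l l' : List Δ) : i :: l < j :: l' :=
  List.Lex.rel h

/-- Monotonicity of splittings: replacing the two parts of a splitting of `l` by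
lexicographically larger words of the same lengths yields a splitting of a
lexicographically larger word. -/
theorem splits_mono :
    ∀ (l s t s' t' : List Δ), (s, t) ∈ splits l → s.length = s'.length →
      t.length = t'.length → s ≤ s' → t ≤ t' →
      (s = s' ∧ t = t') ∨ ∃ l', (s', t') ∈ splits l' ∧ l < l' := by
  intro l
  induction l with
  | nil =>
    intro s t s' t' hmem hls hlt _ _
    simp only [splits, List.mem_singleton, Prod.mk.injEq] at hmem
    obtain ⟨rfl, rfl⟩ := hmem
    left
    constructor
    · exact (List.length_eq_zero_iff.1 hls.symm).symm
    · exact (List.length_eq_zero_iff.1 hlt.symm).symm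
  | cons i l ih =>
    intro s t s' t' hmem hls hlt hs ht
    simp only [splits, List.mem_flatMap, List.mem_cons, List.mem_singleton,
      Prod.mk.injEq, List.not_mem_nil, or_false] at hmem
    obtain ⟨⟨s₀, t₀⟩, hpr, h | h⟩ := hmem
    · obtain ⟨h1, h2⟩ := h
      subst h1; subst h2
      -- s = i :: s₀, t = t₀
      cases s' with
      | nil => simp at hls
      | cons j s₀' =>
        rcases lt_or_eq_of_le hs with hlt' | heq
        · rcases hlt' with _ | _
          case rel j hij =>
            -- i < j : take l' = s' ++ t'
            right
            refine ⟨(j :: s₀') ++ t', append_mem_splits _ _, ?_⟩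
            exact cons_lt_cons_of_head hij _ _
          case cons htail =>
            -- i = j, s₀ < s₀'
            rcases ih s₀ t s₀' t' hpr (by simpa using hls) hlt (le_of_lt htail) ht with
              ⟨rfl, rfl⟩ | ⟨l'', hmem'', hlt''⟩
            · have hcontr : s₀ < s₀ := htail
              exact absurd hcontr (lt_irrefl _)
            · right
              refine ⟨i :: l'', ?_, cons_lt_cons_of_lt i hlt''⟩
              simp only [splits, List.mem_flatMap]
              exact ⟨(s₀', t'), hmem'', by simp⟩
        · -- s = s'
          rw [List.cons_eq_cons] at heq
          obtain ⟨rfl, rfl⟩ := heq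
          rcases ih s₀ t s₀ t' hpr rfl hlt le_rfl ht with
            ⟨_, rfl⟩ | ⟨l'', hmem'', hlt''⟩
          · exact Or.inl ⟨rfl, rfl⟩
          · right
            refine ⟨i :: l'', ?_, cons_lt_cons_of_lt i hlt''⟩
            simp only [splits, List.mem_flatMap]
            exact ⟨(s₀, t'), hmem'', by simp⟩
    · obtain ⟨h1, h2⟩ := h
      subst h1; subst h2
      -- s = s₀, t = i :: t₀
      cases t' with
      | nil => simp at hlt
      | cons j t₀' =>
        rcases lt_or_eq_of_le ht with hlt' | heq
        · rcases hlt' with _ | _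
          case rel j hij =>
            right
            refine ⟨(j :: t₀') ++ s', swap_mem_splits (append_mem_splits _ _), ?_⟩
            exact cons_lt_cons_of_head hij _ _
          case cons htail =>
            rcases ih s t₀ s' t₀' hpr hls (by simpa using hlt) hs (le_of_lt htail) with
              ⟨rfl, rfl⟩ | ⟨l'', hmem'', hlt''⟩
            · have hcontr : t₀ < t₀ := htail
              exact absurd hcontr (lt_irrefl _)
            · right
              refine ⟨i :: l'', ?_, cons_lt_cons_of_lt i hlt''⟩
              simp only [splits, List.mem_flatMap]
              exact ⟨(s', t₀'), hmem'', by simp⟩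
        · rw [List.cons_eq_cons] at heq
          obtain ⟨rfl, rfl⟩ := heq
          rcases ih s t₀ s' t₀ hpr hls rfl hs le_rfl with
            ⟨rfl, _⟩ | ⟨l'', hmem'', hlt''⟩
          · exact Or.inl ⟨rfl, rfl⟩
          · right
            refine ⟨i :: l'', ?_, cons_lt_cons_of_lt i hlt''⟩
            simp only [splits, List.mem_flatMap]
            exact ⟨(s', t₀), hmem'', by simp⟩

end Order

/-- All words of a given length with letters in a given finite set. -/
def wordFinset [DecidableEq Δ] (L : Finset Δ) : ℕ → Finset (List Δ)
  | 0 => {[]}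
  | n + 1 => L.biUnion fun i => (wordFinset L n).image (i :: ·)

theorem mem_wordFinset [DecidableEq Δ] (L : Finset Δ) :
    ∀ (n : ℕ) (l : List Δ), l ∈ wordFinset L n ↔ l.length = n ∧ ∀ x ∈ l, x ∈ L := by
  intro n
  induction n with
  | zero =>
    intro l
    simp only [wordFinset, Finset.mem_singleton]
    constructor
    · rintro rfl; simp
    · rintro ⟨h, _⟩; exact List.length_eq_zero_iff.1 h
  | succ n ih =>
    intro l
    simp only [wordFinset, Finset.mem_biUnion, Finset.mem_image]
    constructor
    · rintro ⟨i, hi, l₀, hl₀, rfl⟩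
      obtain ⟨h1, h2⟩ := (ih l₀).1 hl₀
      refine ⟨by simp [h1], ?_⟩
      intro x hx
      rcases List.mem_cons.1 hx with rfl | hx
      · exact hi
      · exact h2 x hx
    · rintro ⟨h1, h2⟩
      cases l with
      | nil => simp at h1
      | cons i l₀ =>
        refine ⟨i, h2 i (by simp), l₀, (ih l₀).2 ⟨by simpa using h1, ?_⟩, rfl⟩
        exact fun x hx => h2 x (List.mem_cons_of_mem _ hx)

theorem sum_sub_count_smul_mem {α : Type*} [BEq α] [LawfulBEq α] (p : Ideal R) (f : α → R)
    (z : α) : ∀ L : List α, (∀ w ∈ L, w ≠ z → f w ∈ p) →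
      (L.map f).sum - (L.count z) • f z ∈ p := by
  intro L
  induction L with
  | nil => simp
  | cons a L ih =>
    intro h
    have hrest := ih fun w hw hne => h w (List.mem_cons_of_mem _ hw) hne
    by_cases ha : a = z
    · subst ha
      rw [List.map_cons, List.sum_cons, List.count_cons_self, add_smul, one_smul]
      have : f a + (List.map f L).sum - ((List.count a L) • f a + f a)
          = (List.map f L).sum - (List.count a L) • f a := by ring
      rw [this]
      exact hrest
    · rw [List.map_cons, List.sum_cons, List.count_cons_of_ne ha]
      have : f a + (List.map f L).sum - (List.count z L) • f z
          = f a + ((List.map f L).sum - (List.count z L) • f z) := by ring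
      rw [this]
      exact Ideal.add_mem p (h a (by simp) ha) hrest

theorem nat_smul_mem [Algebra ℚ R] (p : Ideal R) {c : ℕ} (hc : c ≠ 0) {x : R}
    (h : c • x ∈ p) : x ∈ p := by
  have hx : x = algebraMap ℚ R ((c : ℚ)⁻¹) * (c • x) := by
    rw [nsmul_eq_mul, ← mul_assoc, ← map_natCast (algebraMap ℚ R) c, ← map_mul,
      inv_mul_cancel₀ (by exact_mod_cast hc), map_one, one_mul]
  rw [hx]
  exact Ideal.mul_mem_left _ _ h

end DeltaAux

open DeltaAux in
/-- Let `R` be a commutative `ℚ`-algebra equipped with a family `(d i)_{i ∈ Δ}` of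
derivations and let `𝔭` be a prime ideal of `R`. Then
`𝔭_# = {x | θ(x) ∈ 𝔭 for every word θ in the d i's}` is a prime ideal of `R`,
a `Δ`-ideal, and is contained in `𝔭`. -/
theorem stmt_8 {R Δ : Type*} [CommRing R] [Algebra ℚ R]
    (d : Δ → Derivation ℤ R R) (p : Ideal R) (hp : p.IsPrime) :
    ∃ q : Ideal R,
      (q : Set R) = {x : R | ∀ l : List Δ, derWord d l x ∈ p} ∧
      q.IsPrime ∧ (∀ i, ∀ x ∈ q, d i x ∈ q) ∧ q ≤ p := by
  classical
  letI : LinearOrder Δ := IsWellOrder.linearOrder WellOrderingRel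
  set q : Ideal R :=
    { carrier := {x : R | ∀ l : List Δ, derWord d l x ∈ p}
      add_mem' := fun {x y} hx hy l => by
        rw [derWord_add]; exact Ideal.add_mem p (hx l) (hy l)
      zero_mem' := fun l => by rw [derWord_zero]; exact Ideal.zero_mem p
      smul_mem' := fun c {x} hx l => by
        rw [smul_eq_mul, derWord_mul]
        refine list_sum_mem fun z hz => ?_
        obtain ⟨pr, _, rfl⟩ := List.mem_map.1 hz
        exact Ideal.mul_mem_left p _ (hx pr.2) } with hq
  have hmemq : ∀ x : R, x ∈ q ↔ ∀ l : List Δ, derWord d l x ∈ p := fun x => Iff.rfl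
  refine ⟨q, rfl, ?_, ?_, ?_⟩
  · -- primality
    constructor
    · intro htop
      apply hp.ne_top
      rw [Ideal.eq_top_iff_one]
      have h1 : (1 : R) ∈ q := htop ▸ Submodule.mem_top
      simpa [derWord_nil] using (hmemq 1).1 h1 []
    · intro x y hxy
      by_contra hcon
      push_neg at hcon
      obtain ⟨hx, hy⟩ := hcon
      rw [hmemq] at hx hy
      push_neg at hx hy
      obtain ⟨u₀, hu₀⟩ := hx
      obtain ⟨w₀, hw₀⟩ := hy
      -- minimal lengths
      have hPx : ∃ n : ℕ, ∃ u : List Δ, u.length = n ∧ derWord d u x ∉ p :=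
        ⟨u₀.length, u₀, rfl, hu₀⟩
      have hPy : ∃ n : ℕ, ∃ u : List Δ, u.length = n ∧ derWord d u y ∉ p :=
        ⟨w₀.length, w₀, rfl, hw₀⟩
      set m := Nat.find hPx with hm
      set n := Nat.find hPy with hn
      obtain ⟨u₁, hu₁len, hu₁⟩ := Nat.find_spec hPx
      obtain ⟨w₁, hw₁len, hw₁⟩ := Nat.find_spec hPy
      have hminx : ∀ u : List Δ, u.length < m → derWord d u x ∈ p := by
        intro u hu
        by_contra h
        exact Nat.find_min hPx hu ⟨u, rfl, h⟩
      have hminy : ∀ u : List Δ, u.length < n → derWord d u y ∈ p := by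
        intro u hu
        by_contra h
        exact Nat.find_min hPy hu ⟨u, rfl, h⟩
      set L : Finset Δ := (u₁ ++ w₁).toFinset with hL
      -- maximal words
      set Sx : Finset (List Δ) := (wordFinset L m).filter
        (fun u => derWord d u x ∉ p) with hSx
      set Sy : Finset (List Δ) := (wordFinset L n).filter
        (fun u => derWord d u y ∉ p) with hSy
      have hSxne : Sx.Nonempty := by
        refine ⟨u₁, Finset.mem_filter.2 ⟨(mem_wordFinset L m u₁).2 ⟨hu₁len, ?_⟩, hu₁⟩⟩
        intro z hz; simp [hL, hz]
      have hSyne : Sy.Nonempty := by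
        refine ⟨w₁, Finset.mem_filter.2 ⟨(mem_wordFinset L n w₁).2 ⟨hw₁len, ?_⟩, hw₁⟩⟩
        intro z hz; simp [hL, hz]
      set sm : List Δ := Sx.max' hSxne with hsm
      set tm : List Δ := Sy.max' hSyne with htm
      have hsmmem := Finset.max'_mem Sx hSxne
      have htmmem := Finset.max'_mem Sy hSyne
      obtain ⟨hsmW, hsmp⟩ := Finset.mem_filter.1 hsmmem
      obtain ⟨htmW, htmp⟩ := Finset.mem_filter.1 htmmem
      obtain ⟨hsmlen, hsmL⟩ := (mem_wordFinset L m sm).1 hsmW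
      obtain ⟨htmlen, htmL⟩ := (mem_wordFinset L n tm).1 htmW
      -- maximal interleaving
      set T : Finset (List Δ) := (wordFinset L (m + n)).filter
        (fun l => (sm, tm) ∈ splits l) with hT
      have hTne : T.Nonempty := by
        refine ⟨sm ++ tm, Finset.mem_filter.2 ⟨(mem_wordFinset L (m + n) _).2
          ⟨by simp [hsmlen, htmlen], ?_⟩, append_mem_splits sm tm⟩⟩
        intro z hz
        rcases List.mem_append.1 hz with h | h
        · exact hsmL z h
        · exact htmL z h
      set W : List Δ := T.max' hTne with hW
      have hWmem := Finset.max'_mem T hTne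
      obtain ⟨hWword, hWsplit⟩ := Finset.mem_filter.1 hWmem
      obtain ⟨hWlen, hWL⟩ := (mem_wordFinset L (m + n) W).1 hWword
      -- the sum
      set f : List Δ × List Δ → R := fun pr => derWord d pr.1 x * derWord d pr.2 y with hf
      have hsum : ((splits W).map f).sum ∈ p := by
        rw [hf, ← derWord_mul]
        exact (hmemq _).1 hxy W
      have hother : ∀ pr ∈ splits W, pr ≠ (sm, tm) → f pr ∈ p := by
        rintro ⟨s, t⟩ hmem hne
        have hlensum : s.length + t.length = m + n := by
          rw [length_of_mem_splits hmem, hWlen]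
        by_cases hslen : s.length < m
        · exact Ideal.mul_mem_right _ p (hminx s hslen)
        by_cases htlen : t.length < n
        · exact Ideal.mul_mem_left p _ (hminy t htlen)
        have hsl : s.length = m := by omega
        have htl : t.length = n := by omega
        by_cases hsp : derWord d s x ∈ p
        · exact Ideal.mul_mem_right _ p hsp
        by_cases htp : derWord d t y ∈ p
        · exact Ideal.mul_mem_left p _ htp
        exfalso
        -- s, t are words over L
        have hsmemL : ∀ z ∈ s, z ∈ L := fun z hz =>
          hWL z (mem_splits_of_mem_splits hmem z hz)
        have htmemL : ∀ z ∈ t, z ∈ L := fun z hz =>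
          hWL z (mem_splits_of_mem_splits (swap_mem_splits hmem) z hz)
        have hsle : s ≤ sm := Finset.le_max' Sx s
          (Finset.mem_filter.2 ⟨(mem_wordFinset L m s).2 ⟨hsl, hsmemL⟩, hsp⟩)
        have htle : t ≤ tm := Finset.le_max' Sy t
          (Finset.mem_filter.2 ⟨(mem_wordFinset L n t).2 ⟨htl, htmemL⟩, htp⟩)
        rcases splits_mono W s t sm tm hmem (by rw [hsl, hsmlen]) (by rw [htl, htmlen])
          hsle htle with ⟨h1, h2⟩ | ⟨l', hl'mem, hl'lt⟩
        · exact hne (by rw [h1, h2])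
        · -- l' is in T, contradicting maximality of W
          have hl'len : l'.length = m + n := by
            rw [← length_of_mem_splits hl'mem, hsmlen, htmlen]
          have hl'L : ∀ z ∈ l', z ∈ L := by
            intro z hz
            rcases mem_of_mem_splits hl'mem z hz with h | h
            · exact hsmL z h
            · exact htmL z h
          have : l' ∈ T := Finset.mem_filter.2
            ⟨(mem_wordFinset L (m + n) l').2 ⟨hl'len, hl'L⟩, hl'mem⟩
          exact absurd (Finset.le_max' T l' this) (not_le_of_gt hl'lt)
      -- extract the main term
      have hcount : ((splits W).count (sm, tm)) • f (sm, tm) ∈ p := by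
        have hsub := sum_sub_count_smul_mem p f (sm, tm) (splits W) hother
        have : ((splits W).count (sm, tm)) • f (sm, tm)
            = ((splits W).map f).sum
              - (((splits W).map f).sum - ((splits W).count (sm, tm)) • f (sm, tm)) := by
          ring
        rw [this]
        exact Ideal.sub_mem p hsum hsub
      have hcpos : (splits W).count (sm, tm) ≠ 0 := by
        rw [← Nat.pos_iff_ne_zero]
        exact List.count_pos_iff.2 hWsplit
      have hmain : f (sm, tm) ∈ p := nat_smul_mem p hcpos hcount
      rcases hp.mem_or_mem hmain with h | h
      · exact hsmp h
      · exact htmp h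
  · -- Δ-ideal
    intro i x hx l
    rw [hmemq] at hx
    have := hx (l ++ [i])
    rwa [derWord_append] at this
  · -- q ≤ p
    intro x hx
    exact (hmemq x).1 hx []
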